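/- An abelian group A is SB-generated if and only if A is finitely generated. Equivalently, for abelian groups, finite generation, SB-generation, and uncountable cofinality all coincide. -/

import Mathlib

open Pointwise

/-- `d` is a left-invariant metric on the group `G`. -/
def IsLeftInvMetric {G : Type*} [Group G] (d : G → G → ℝ) : Prop :=
  (∀ x y, d x y = 0 ↔ x = y) ∧ (∀ x y, d x y = d y x) ∧
    (∀ x y z, d x z ≤ d x y + d y z) ∧ (∀ k x y, d (k * x) (k * y) = d x y)

/-- `d` is a left-invariant pseudo-metric on the group `G`. -/
def IsLeftInvPseudoMetric {G : Type*} [Group G] (d : G → G → ℝ) : Prop :=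
  (∀ x, d x x = 0) ∧ (∀ x y, d x y = d y x) ∧
    (∀ x y z, d x z ≤ d x y + d y z) ∧ (∀ k x y, d (k * x) (k * y) = d x y)

/-- A subset of a group is strongly bounded if it has finite diameter in every
left-invariant metric on the group. -/
def StronglyBounded {G : Type*} [Group G] (A : Set G) : Prop :=
  ∀ d : G → G → ℝ, IsLeftInvMetric d → ∃ D : ℝ, ∀ a ∈ A, ∀ b ∈ A, d a b ≤ D

/-- The word length of `g` with respect to `S`: the least `n` with `g ∈ S^n`. -/
noncomputable def wordLength {G : Type*} [Group G] (S : Set G) (g : G) : ℕ :=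
  sInf {n : ℕ | g ∈ S ^ n}

/-- The word metric associated to a generating set `S`. -/
noncomputable def wordMetric {G : Type*} [Group G] (S : Set G) (g h : G) : ℝ :=
  (wordLength S (h⁻¹ * g) : ℝ)

/-- A group is SB-generated if it is generated by a strongly bounded subset. -/
def SBGenerated (G : Type*) [Group G] : Prop :=
  ∃ S : Set G, StronglyBounded S ∧ Subgroup.closure S = ⊤

/-- A group has uncountable cofinality if it is not the union of a strictly
increasing sequence of (necessarily proper) subgroups indexed by `ℕ`. -/
def UncountableCofinality (G : Type*) [Group G] : Prop :=
  ¬ ∃ H : ℕ → Subgroup G, StrictMono H ∧ ∀ g : G, ∃ n, g ∈ H n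

-- Part 1
lemma sb13_part1 {G : Type*} [Group G] (h : Group.FG G) : SBGenerated G := by
  obtain ⟨S, hS, hfin⟩ := Group.fg_iff.mp h
  refine ⟨S, fun d _ => ?_, hS⟩
  obtain ⟨D, hD⟩ := ((hfin.prod hfin).image (fun p : G × G => d p.1 p.2)).bddAbove
  exact ⟨D, fun a ha b hb => hD ⟨⟨a, b⟩, ⟨ha, hb⟩, rfl⟩⟩

-- Part 2
lemma sb13_part2 {G : Type*} [Group G] (h : SBGenerated G) : UncountableCofinality G := by
  obtain ⟨S, hSB, hgen⟩ := h
  rintro ⟨H, hsm, hcov⟩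
  classical
  have hmono := hsm.monotone
  set ℓ : G → ℕ := fun g => sInf {n | g ∈ H n} with hℓ
  have hmemℓ : ∀ g : G, g ∈ H (ℓ g) := fun g => Nat.sInf_mem (hcov g)
  have hle : ∀ {g n}, g ∈ H n → ℓ g ≤ n := fun {g n} hg => Nat.sInf_le hg
  have hmul : ∀ a b : G, ℓ (a * b) ≤ ℓ a + ℓ b := by
    intro a b
    have : a * b ∈ H (max (ℓ a) (ℓ b)) :=
      mul_mem (hmono (le_max_left _ _) (hmemℓ a)) (hmono (le_max_right _ _) (hmemℓ b))
    exact (hle this).trans (max_le (Nat.le_add_right _ _) (Nat.le_add_left _ _))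
  have hinv : ∀ a : G, ℓ a⁻¹ = ℓ a := by
    intro a
    have h1 : ∀ a : G, ℓ a⁻¹ ≤ ℓ a := fun a => hle (inv_mem (hmemℓ a))
    exact le_antisymm (h1 a) (by simpa using h1 a⁻¹)
  set d : G → G → ℝ := fun g h => if g = h then 0 else (ℓ (g⁻¹ * h) + 1 : ℕ) with hd
  have hdnn : ∀ g h, 0 ≤ d g h := by
    intro g h
    by_cases hgh : g = h <;> simp [hd, hgh]
    positivity
  have hmet : IsLeftInvMetric d := by
    refine ⟨?_, ?_, ?_, ?_⟩
    · intro x y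
      constructor
      · intro h0
        by_contra hne
        simp only [hd, if_neg hne] at h0
        have : (0:ℝ) < (ℓ (x⁻¹ * y) + 1 : ℕ) := by positivity
        rw [h0] at this
        exact lt_irrefl _ this
      · intro h; simp [hd, h]
    · intro x y
      by_cases hxy : x = y
      · simp [hd, hxy]
      · have : ℓ (x⁻¹ * y) = ℓ (y⁻¹ * x) := by
          rw [← hinv (x⁻¹ * y)]; simp
        simp [hd, hxy, Ne.symm hxy, this]
    · intro x y z
      by_cases hxz : x = z
      · simpa [hd, hxz] using add_nonneg (hdnn x y) (hdnn y z)
      · by_cases hxy : x = y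
        · subst hxy; simp [hd, hxz]
        · by_cases hyz : y = z
          · subst hyz; simp [hd, hxy]
          · have key : ℓ (x⁻¹ * z) ≤ ℓ (x⁻¹ * y) + ℓ (y⁻¹ * z) := by
              have hxx : x⁻¹ * z = (x⁻¹ * y) * (y⁻¹ * z) := by group
              rw [hxx]; exact hmul _ _
            simp only [hd, if_neg hxz, if_neg hxy, if_neg hyz]
            push_cast
            have : (ℓ (x⁻¹ * z) : ℝ) ≤ (ℓ (x⁻¹ * y) : ℝ) + (ℓ (y⁻¹ * z) : ℝ) := by
              exact_mod_cast key
            linarith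
    · intro k x y
      by_cases hxy : x = y
      · simp [hd, hxy]
      · have h2 : ¬ (k * x = k * y) := fun hc => hxy (mul_left_cancel hc)
        have h3 : (k * x)⁻¹ * (k * y) = x⁻¹ * y := by group
        simp only [hd, if_neg hxy, if_neg h2, h3]
  obtain ⟨D, hD⟩ := hSB d hmet
  have hex : ∃ N, S ⊆ (H N : Set G) := by
    by_cases hne : S.Nonempty
    · obtain ⟨s₀, hs₀⟩ := hne
      refine ⟨max (ℓ s₀) ⌈D⌉₊, fun s hs => ?_⟩
      by_cases hss : s₀ = s
      · subst hss; exact hmono (le_max_left _ _) (hmemℓ s₀)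
      · have hds : d s₀ s ≤ D := hD s₀ hs₀ s hs
        have hcast : ((ℓ (s₀⁻¹ * s) + 1 : ℕ) : ℝ) ≤ D := by
          simpa [hd, hss] using hds
        have hr : (ℓ (s₀⁻¹ * s) : ℝ) ≤ D := by push_cast at hcast; linarith
        have hloD : ℓ (s₀⁻¹ * s) ≤ ⌈D⌉₊ := by
          exact_mod_cast hr.trans (Nat.le_ceil D)
        have h1 : s₀⁻¹ * s ∈ H (max (ℓ s₀) ⌈D⌉₊) :=
          hmono (le_max_right _ _) (hmono hloD (hmemℓ _))
        have h2 : s₀ ∈ H (max (ℓ s₀) ⌈D⌉₊) := hmono (le_max_left _ _) (hmemℓ s₀)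
        simpa using mul_mem h2 h1
    · exact ⟨0, by simp [Set.not_nonempty_iff_eq_empty.mp hne]⟩
  obtain ⟨N, hN⟩ := hex
  have htop : H N = ⊤ := by
    rw [eq_top_iff, ← hgen]
    exact (Subgroup.closure_le _).mpr hN
  have hlt : H N < H (N + 1) := hsm (Nat.lt_succ_self N)
  rw [htop] at hlt
  exact (not_top_lt hlt)

/-- property: every monotone covering chain of additive subgroups hits ⊤. -/
def sb13Pa (A : Type*) [AddCommGroup A] : Prop :=
  ∀ K : ℕ → AddSubgroup A, Monotone K → (∀ x, ∃ n, x ∈ K n) → ∃ n, K n = ⊤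

lemma sb13_extract {G : Type*} [Group G] (hG : UncountableCofinality G)
    (K : ℕ → Subgroup G) (mono : Monotone K) (cov : ∀ g, ∃ n, g ∈ K n) : ∃ n, K n = ⊤ := by
  by_contra hc
  push_neg at hc
  have step : ∀ n, ∃ m, K n < K m := by
    intro n
    have hex : ∃ g, g ∉ K n := by
      by_contra h; push_neg at h; exact hc n ((Subgroup.eq_top_iff' _).mpr h)
    obtain ⟨g, hg⟩ := hex
    obtain ⟨m, hm⟩ := cov g
    refine ⟨max n m, lt_of_le_of_ne (mono (le_max_left n m)) fun he => hg ?_⟩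
    rw [he]; exact mono (le_max_right n m) hm
  choose c hc2 using step
  let f : ℕ → ℕ := fun k => Nat.rec 0 (fun k fk => max (c fk) (k + 1)) k
  have hf_succ : ∀ k, f (k + 1) = max (c (f k)) (k + 1) := fun k => rfl
  have hsm : StrictMono (K ∘ f) :=
    strictMono_nat_of_lt_succ fun k =>
      lt_of_lt_of_le (hc2 (f k)) (mono (by rw [hf_succ]; exact le_max_left _ _))
  have hge : ∀ k, k ≤ f k := by
    intro k
    induction k with
    | zero => exact Nat.zero_le _
    | succ k ih => rw [hf_succ]; exact le_max_right _ _
  exact hG ⟨K ∘ f, hsm, fun g => by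
    obtain ⟨m, hm⟩ := cov g
    exact ⟨m, mono (hge m) hm⟩⟩

lemma sb13_pa_of_uncof {G : Type*} [CommGroup G] (hG : UncountableCofinality G) :
    sb13Pa (Additive G) := by
  intro K mono cov
  obtain ⟨n, hn⟩ := sb13_extract hG (fun n => Subgroup.toAddSubgroup.symm (K n))
    (fun a b hab => Subgroup.toAddSubgroup.symm.monotone (mono hab))
    (fun g => cov (Additive.ofMul g))
  refine ⟨n, (AddSubgroup.eq_top_iff' _).mpr fun x => ?_⟩
  have : Additive.toMul x ∈ Subgroup.toAddSubgroup.symm (K n) := by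
    rw [hn]; exact Subgroup.mem_top _
  exact this

lemma sb13_pa_quot {C : Type*} [AddCommGroup C] (h : sb13Pa C) (N : AddSubgroup C) :
    sb13Pa (C ⧸ N) := by
  intro K mono cov
  obtain ⟨n, hn⟩ := h (fun n => (K n).comap (QuotientAddGroup.mk' N))
    (fun a b hab => AddSubgroup.comap_mono (mono hab))
    (fun c => cov (QuotientAddGroup.mk' N c))
  refine ⟨n, (AddSubgroup.eq_top_iff' _).mpr fun y => ?_⟩
  obtain ⟨c, rfl⟩ := QuotientAddGroup.mk'_surjective N y
  have : c ∈ (K n).comap (QuotientAddGroup.mk' N) := by rw [hn]; exact AddSubgroup.mem_top c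
  exact this

lemma sb13_lift {C : Type*} [AddCommGroup C] (N : AddSubgroup C) (h : AddGroup.FG (C ⧸ N)) :
    ∃ F : Finset C, ∀ c : C, ∃ f ∈ AddSubgroup.closure (F : Set C), -f + c ∈ N := by
  classical
  obtain ⟨T, hT, hTfin⟩ := AddGroup.fg_iff.mp h
  set ℓ : C ⧸ N → C := Function.surjInv (QuotientAddGroup.mk'_surjective N) with hℓdef
  have hℓ : ∀ q, QuotientAddGroup.mk' N (ℓ q) = q := fun q => Function.surjInv_eq _ q
  refine ⟨hTfin.toFinset.image ℓ, fun c => ?_⟩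
  have himg : QuotientAddGroup.mk' N '' ((hTfin.toFinset.image ℓ : Finset C) : Set C) = T := by
    rw [Finset.coe_image, Set.Finite.coe_toFinset, Set.image_image]
    simp only [hℓ, Set.image_id']
  have hmap : (AddSubgroup.closure ((hTfin.toFinset.image ℓ : Finset C) : Set C)).map
      (QuotientAddGroup.mk' N) = ⊤ := by
    rw [AddMonoidHom.map_closure, himg, hT]
  have hc : QuotientAddGroup.mk' N c ∈ (AddSubgroup.closure
      ((hTfin.toFinset.image ℓ : Finset C) : Set C)).map (QuotientAddGroup.mk' N) := by
    rw [hmap]; exact AddSubgroup.mem_top _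
  obtain ⟨f, hf, hfc⟩ := hc
  refine ⟨f, hf, QuotientAddGroup.eq.mp ?_⟩
  exact hfc

lemma sb13_fg_ext {C : Type*} [AddCommGroup C] (N : AddSubgroup C) (F0 : Finset C)
    (hN : AddSubgroup.closure (F0 : Set C) = N) (h : AddGroup.FG (C ⧸ N)) : AddGroup.FG C := by
  classical
  obtain ⟨F, hF⟩ := sb13_lift N h
  refine AddGroup.fg_iff.mpr ⟨((F0 ∪ F : Finset C) : Set C),
    (AddSubgroup.eq_top_iff' _).mpr fun c => ?_, (F0 ∪ F).finite_toSet⟩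
  obtain ⟨f, hf, hfc⟩ := hF c
  have h1 : f ∈ AddSubgroup.closure ((F0 ∪ F : Finset C) : Set C) :=
    AddSubgroup.closure_mono (Finset.coe_subset.mpr Finset.subset_union_right) hf
  have h2' : -f + c ∈ AddSubgroup.closure (F0 : Set C) := by rw [hN]; exact hfc
  have h2 : -f + c ∈ AddSubgroup.closure ((F0 ∪ F : Finset C) : Set C) :=
    AddSubgroup.closure_mono (Finset.coe_subset.mpr Finset.subset_union_left) h2'
  have hc : c = f + (-f + c) := by abel
  rw [hc]; exact add_mem h1 h2


lemma sb13_gen (R : Type) [CommRing R] [NoZeroDivisors R] [Nontrivial R]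
    {M : Type*} [AddCommGroup M] [Module R M] (hP : sb13Pa M) :
    ∃ I : Finset M, ∀ x : M, ∃ a : R, a ≠ 0 ∧ a • x ∈ Submodule.span R (I : Set M) := by
  classical
  obtain ⟨I, hind, hmax⟩ := exists_maximal_linearIndepOn R (id : M → M)
  have hIspan : ∀ x : M, ∃ a : R, a ≠ 0 ∧ a • x ∈ Submodule.span R I := by
    intro x
    by_cases hx : x ∈ I
    · exact ⟨1, one_ne_zero, by rw [one_smul]; exact Submodule.subset_span hx⟩
    · obtain ⟨a, ha, hmem⟩ := hmax x hx
      exact ⟨a, ha, by simpa using hmem⟩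
  by_cases hfin : I.Finite
  · refine ⟨hfin.toFinset, ?_⟩
    rw [Set.Finite.coe_toFinset]
    exact hIspan
  · exfalso
    have hinf : I.Infinite := hfin
    set e : ℕ ↪ I := hinf.natEmbedding I
    set g : ℕ → M := fun k => (e k : M) with hg
    have hginj : Function.Injective g := fun a b hab => e.injective (Subtype.ext hab)
    set J : ℕ → Set M := fun n => I \ (g '' Set.Ici n) with hJ
    have hJI : ∀ n, J n ⊆ I := fun n => Set.diff_subset
    have hJmono : Monotone J := fun a b hab =>
      Set.diff_subset_diff_right (Set.image_mono (Set.Ici_subset_Ici.mpr hab))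
    set K : ℕ → AddSubgroup M := fun n =>
      { carrier := {x | ∃ a : R, a ≠ 0 ∧ a • x ∈ Submodule.span R (J n)}
        zero_mem' := ⟨1, one_ne_zero, by simp⟩
        add_mem' := by
          rintro x y ⟨a, ha, hax⟩ ⟨b, hb, hby⟩
          refine ⟨a * b, mul_ne_zero ha hb, ?_⟩
          have heq : (a * b) • (x + y) = b • (a • x) + a • (b • y) := by
            rw [smul_add, ← mul_smul, ← mul_smul, mul_comm b a]
          rw [heq]
          exact add_mem (Submodule.smul_mem _ b hax) (Submodule.smul_mem _ a hby)
        neg_mem' := by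
          rintro x ⟨a, ha, hax⟩
          exact ⟨a, ha, by rw [smul_neg]; exact neg_mem hax⟩ } with hK
    have hKmono : Monotone K := by
      rintro a b hab x ⟨r, hr, hmem⟩
      exact ⟨r, hr, Submodule.span_mono (hJmono hab) hmem⟩
    have hKcov : ∀ x, ∃ n, x ∈ K n := by
      intro x
      obtain ⟨a, ha, hmem⟩ := hIspan x
      obtain ⟨t, htI, htmem⟩ := Submodule.mem_span_finite_of_mem_span hmem
      have hfin2 : {k : ℕ | g k ∈ (t : Set M)}.Finite :=
        Set.Finite.preimage (Set.injOn_of_injective hginj) t.finite_toSet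
      obtain ⟨N, hN⟩ := hfin2.bddAbove
      refine ⟨N + 1, a, ha, Submodule.span_mono ?_ htmem⟩
      intro z hz
      refine ⟨htI hz, ?_⟩
      rintro ⟨k, hk, rfl⟩
      have hkN : k ≤ N := hN hz
      have : N + 1 ≤ k := hk
      omega
    obtain ⟨n, hn⟩ := hP K hKmono hKcov
    have hgn : g n ∈ K n := by rw [hn]; exact AddSubgroup.mem_top _
    obtain ⟨a, ha, hmem⟩ := hgn
    have hsub : J n ⊆ (fun x : I => (x : M)) '' (Set.univ \ {e n}) := by
      intro z hz
      refine ⟨⟨z, hz.1⟩, ⟨Set.mem_univ _, fun hzz => ?_⟩, rfl⟩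
      apply hz.2
      refine ⟨n, le_refl n, ?_⟩
      have : (⟨z, hz.1⟩ : I) = e n := hzz
      rw [hg]
      exact congrArg Subtype.val this.symm
    have hmem2 : a • (fun x : I => (x : M)) (e n) ∈
        Submodule.span R ((fun x : I => (x : M)) '' (Set.univ \ {e n})) :=
      Submodule.span_mono hsub hmem
    have := linearIndependent_iff_eq_zero_of_smul_mem_span.mp hind (e n) a hmem2
    exact ha this

lemma sb13_vs {C : Type*} [AddCommGroup C] (p : ℕ) (hp : p.Prime) (hP : sb13Pa C)
    (hexp : ∀ c : C, p • c = 0) : AddGroup.FG C := by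
  haveI : Fact p.Prime := ⟨hp⟩
  haveI : NeZero p := ⟨hp.ne_zero⟩
  have M0 : Module (ZMod p) C := AddCommMonoid.zmodModule hexp
  letI : Module (ZMod p) C := M0
  obtain ⟨I, hI⟩ := sb13_gen (ZMod p) hP
  have hspan : Submodule.span (ZMod p) (I : Set C) = ⊤ := by
    rw [Submodule.eq_top_iff']
    intro x
    obtain ⟨a, ha, hmem⟩ := hI x
    have h2 := Submodule.smul_mem _ a⁻¹ hmem
    rwa [inv_smul_smul₀ ha] at h2
  refine AddGroup.fg_iff.mpr ⟨(I : Set C), (AddSubgroup.eq_top_iff' _).mpr fun x => ?_,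
    I.finite_toSet⟩
  have hx : x ∈ Submodule.span (ZMod p) (I : Set C) := by
    have hxt : x ∈ (⊤ : Submodule (ZMod p) C) := Submodule.mem_top
    rwa [← hspan] at hxt
  induction hx using Submodule.span_induction with
  | mem z hz => exact AddSubgroup.subset_closure hz
  | zero => exact zero_mem _
  | add y z _ _ ihy ihz => exact add_mem ihy ihz
  | smul a y _ ih =>
    have : a • y = a.val • y := by rw [← Nat.cast_smul_eq_nsmul (ZMod p), ZMod.natCast_val,
      ZMod.cast_id]
    rw [this]
    exact AddSubgroup.nsmul_mem _ ih _

universe u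

lemma sb13_ind : ∀ m : ℕ, 0 < m → ∀ (C : Type u) (_ : AddCommGroup C),
    sb13Pa C → (∀ c : C, m • c = 0) → AddGroup.FG C := by
  intro m
  induction m using Nat.strong_induction_on with
  | _ m IH =>
  intro hm C _ hP hexp
  by_cases hm1 : m = 1
  · subst hm1
    have hzero : ∀ c : C, c = 0 := fun c => by simpa using hexp c
    refine AddGroup.fg_iff.mpr ⟨∅, (AddSubgroup.eq_top_iff' _).mpr fun c => ?_,
      Set.finite_empty⟩
    rw [hzero c]; exact zero_mem _
  · set p := m.minFac with hpdef
    have hp : p.Prime := Nat.minFac_prime hm1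
    set φ : C →+ C := AddMonoidHom.mk' (fun c : C => p • c) (fun a b => smul_add p a b) with hφ
    set N : AddSubgroup C := φ.range with hNdef
    have hexp1 : ∀ y : C ⧸ N, p • y = 0 := by
      intro y
      obtain ⟨c, rfl⟩ := QuotientAddGroup.mk'_surjective N y
      rw [← map_nsmul]
      exact (QuotientAddGroup.eq_zero_iff _).mpr ⟨c, rfl⟩
    have hFG1 : AddGroup.FG (C ⧸ N) := sb13_vs p hp (sb13_pa_quot hP N) hexp1
    obtain ⟨F, hF⟩ := sb13_lift N hFG1
    set G : AddSubgroup C := AddSubgroup.closure (F : Set C) with hGdef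
    have claim1 : ∀ c : C, ∃ d : C, ∃ f ∈ G, c = p • d + f := by
      intro c
      obtain ⟨f, hf, hfc⟩ := hF c
      obtain ⟨d, hd⟩ := hfc
      refine ⟨d, f, hf, ?_⟩
      have hφd : (φ : C → C) d = p • d := rfl
      rw [← hφd, hd]
      abel
    have claim2 : ∀ k : ℕ, ∀ c : C, ∃ d : C, ∃ f ∈ G, c = p ^ k • d + f := by
      intro k
      induction k with
      | zero => intro c; exact ⟨c, 0, zero_mem _, by simp⟩
      | succ k ihk =>
        intro c
        obtain ⟨d, f, hf, hc⟩ := ihk c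
        obtain ⟨d', f', hf', hd⟩ := claim1 d
        refine ⟨d', p ^ k • f' + f, add_mem (AddSubgroup.nsmul_mem _ hf' _) hf, ?_⟩
        have hh : p ^ k • (p • d') = p ^ (k + 1) • d' := by rw [← mul_nsmul, ← pow_succ']
        rw [hc, hd, smul_add, hh]
        abel
    set k := m.factorization p with hkdef
    have hdvd : p ∣ m := Nat.minFac_dvd m
    have hkpos : 0 < k := hp.factorization_pos_of_dvd (by omega) hdvd
    have hpk : p ^ k ∣ m := Nat.ordProj_dvd m p
    set m' := m / p ^ k with hm'def
    have hm'mul : m' * p ^ k = m := Nat.div_mul_cancel hpk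
    have hm'pos : 0 < m' := Nat.div_pos (Nat.le_of_dvd hm hpk) (Nat.pow_pos hp.pos)
    have hm'lt : m' < m := Nat.div_lt_self hm (Nat.one_lt_pow hkpos.ne' hp.one_lt)
    have hexpD : ∀ y : C ⧸ G, m' • y = 0 := by
      intro y
      obtain ⟨c, rfl⟩ := QuotientAddGroup.mk'_surjective G y
      obtain ⟨d, f, hf, hc⟩ := claim2 k c
      have hmkf : (QuotientAddGroup.mk' G) f = 0 := (QuotientAddGroup.eq_zero_iff _).mpr hf
      have hmm : p ^ k * m' = m := by rw [mul_comm]; exact hm'mul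
      rw [hc, map_add, hmkf, add_zero, ← map_nsmul, ← mul_nsmul, hmm, hexp d, map_zero]
    have hFGD : AddGroup.FG (C ⧸ G) :=
      IH m' hm'lt hm'pos (C ⧸ G) inferInstance (sb13_pa_quot hP G) hexpD
    exact sb13_fg_ext G F rfl hFGD

lemma sb13_core {A : Type u} [AddCommGroup A] (hP : sb13Pa A) : AddGroup.FG A := by
  obtain ⟨I, hI⟩ := sb13_gen ℤ hP
  set B : AddSubgroup A := AddSubgroup.closure (I : Set A) with hBdef
  have hIc : ∀ x : A, ∃ a : ℤ, a ≠ 0 ∧ a • x ∈ B := by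
    intro x
    obtain ⟨a, ha, hmem⟩ := hI x
    have hmem2 : a • x ∈ (Submodule.span ℤ ((I : Finset A) : Set A)).toAddSubgroup := hmem
    rw [Submodule.span_int_eq_addSubgroupClosure] at hmem2
    exact ⟨a, ha, hmem2⟩
  have hnat : ∀ x : A, ∃ n : ℕ, n ≠ 0 ∧ n • x ∈ B := by
    intro x
    obtain ⟨a, ha, hmem⟩ := hIc x
    refine ⟨a.natAbs, Int.natAbs_ne_zero.mpr ha, ?_⟩
    rcases Int.natAbs_eq a with h | h
    · rw [← natCast_zsmul, ← h]; exact hmem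
    · rw [← natCast_zsmul]
      have heq : ((a.natAbs : ℤ)) • x = -(a • x) := by rw [h]; simp
      rw [heq]; exact neg_mem hmem
  set K : ℕ → AddSubgroup A := fun j =>
    B.comap (AddMonoidHom.mk' (fun x : A => (j.factorial) • x) (fun a b => smul_add _ a b))
    with hK
  have hKmono : Monotone K := by
    rintro a b hab x hx
    obtain ⟨c, hc⟩ := Nat.factorial_dvd_factorial hab
    have heq : b.factorial • x = c • (a.factorial • x) := by
      rw [← mul_nsmul, ← hc]
    have hx' : a.factorial • x ∈ B := hx
    show b.factorial • x ∈ B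
    rw [heq]
    exact AddSubgroup.nsmul_mem _ hx' _
  have hKcov : ∀ x, ∃ j, x ∈ K j := by
    intro x
    obtain ⟨n, hn, hmem⟩ := hnat x
    refine ⟨n, ?_⟩
    obtain ⟨c, hc⟩ := Nat.dvd_factorial (Nat.pos_of_ne_zero hn) (le_refl n)
    show n.factorial • x ∈ B
    have heq : n.factorial • x = c • (n • x) := by rw [← mul_nsmul, ← hc]
    rw [heq]
    exact AddSubgroup.nsmul_mem _ hmem _
  obtain ⟨j, hj⟩ := hP K hKmono hKcov
  have hsur : ∀ x : A, j.factorial • x ∈ B := by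
    intro x
    have hx : x ∈ K j := by rw [hj]; exact AddSubgroup.mem_top _
    exact hx
  have hexpQ : ∀ y : A ⧸ B, j.factorial • y = 0 := by
    intro y
    obtain ⟨c, rfl⟩ := QuotientAddGroup.mk'_surjective B y
    rw [← map_nsmul]
    exact (QuotientAddGroup.eq_zero_iff _).mpr (hsur c)
  have hFGQ : AddGroup.FG (A ⧸ B) :=
    sb13_ind j.factorial j.factorial_pos (A ⧸ B) inferInstance (sb13_pa_quot hP B) hexpQ
  exact sb13_fg_ext B I rfl hFGQ

lemma sb13_part4 {G : Type u} [CommGroup G] (h : UncountableCofinality G) : Group.FG G :=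
  GroupFG.iff_add_fg.mpr (sb13_core (sb13_pa_of_uncof h))

theorem stmt13 {A : Type*} [CommGroup A] :
    (SBGenerated A ↔ Group.FG A) ∧ (Group.FG A ↔ UncountableCofinality A) := by
  have h1 : Group.FG A → SBGenerated A := sb13_part1
  have h2 : SBGenerated A → UncountableCofinality A := sb13_part2
  have h3 : UncountableCofinality A → Group.FG A := sb13_part4
  exact ⟨⟨fun h => h3 (h2 h), h1⟩, fun h => h2 (h1 h), h3⟩
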